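/- Let n ≥ 3 be fixed and p a prime. Define D_n(k) = a_n'(k)/a_n(k), where a_n(k) = Σ_{d_1···d_n=k} d_1^0···d_n^{n-1} and a_n'(k) = Σ_{d_1···d_n=k} Π_i Σ_{g|d_i} μ(g)(d_i/g)^{i-1}. Then D_n(p^m) → (1 - 1/p^{n-1})^n as m → ∞. -/

import Mathlib

open Finset ArithmeticFunction

/-- The set of n-tuples of positive integers with product k. -/
def tuples (n k : ℕ) : Finset (Fin n → ℕ) :=
  (Fintype.piFinset fun _ => k.divisors).filter fun d => ∏ i, d i = k

/-- a_n(k) = Σ_{d_1⋯d_n = k} d_1^0 d_2^1 ⋯ d_n^{n-1}. -/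
def an (n k : ℕ) : ℕ := ∑ d ∈ tuples n k, ∏ i : Fin n, d i ^ (i : ℕ)

/-- a_n'(k) = Σ_{d_1⋯d_n = k} Π_i Σ_{g ∣ d_i} μ(g) (d_i/g)^{i-1}. -/
def an' (n k : ℕ) : ℤ :=
  ∑ d ∈ tuples n k, ∏ i : Fin n,
    ∑ g ∈ (d i).divisors, moebius g * ((d i / g : ℕ) : ℤ) ^ (i : ℕ)

namespace DLaux

/-- Exponent tuples summing to m. -/
def Ex (n m : ℕ) : Finset (Fin n → ℕ) :=
  (Fintype.piFinset fun _ => Finset.range (m+1)).filter fun e => ∑ i, e i = m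

lemma mem_Ex {n m : ℕ} {e : Fin n → ℕ} : e ∈ Ex n m ↔ ∑ i, e i = m := by
  simp only [Ex, Finset.mem_filter, Fintype.mem_piFinset, Finset.mem_range]
  refine ⟨fun h => h.2, fun h => ⟨fun a => ?_, h⟩⟩
  have : e a ≤ ∑ i, e i := Finset.single_le_sum (fun i _ => Nat.zero_le _) (Finset.mem_univ a)
  omega

lemma eq_pow_factorization {p : ℕ} (hp : p.Prime) {m x : ℕ} (hx : x ∣ p ^ m) :
    x = p ^ (x.factorization p) := by
  obtain ⟨k, hk, rfl⟩ := (Nat.dvd_prime_pow hp).1 hx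
  rw [hp.factorization_pow]
  simp

lemma sum_tuples {M : Type*} [AddCommMonoid M] {p : ℕ} (hp : p.Prime) (n m : ℕ)
    (G : (Fin n → ℕ) → M) :
    ∑ d ∈ tuples n (p^m), G d = ∑ e ∈ Ex n m, G (fun i => p ^ e i) := by
  have hpm : p ^ m ≠ 0 := pow_ne_zero _ hp.pos.ne'
  have hmem : ∀ d ∈ tuples n (p^m), (∀ i, d i ∣ p ^ m) ∧ ∏ i, d i = p ^ m := by
    intro d hd
    simp only [tuples, Finset.mem_filter, Fintype.mem_piFinset, Nat.mem_divisors] at hd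
    exact ⟨fun i => (hd.1 i).1, hd.2⟩
  refine Finset.sum_nbij' (fun d => fun i => (d i).factorization p)
    (fun e => fun i => p ^ e i) ?_ ?_ ?_ ?_ ?_
  · intro d hd
    obtain ⟨hdvd, hprod⟩ := hmem d hd
    rw [mem_Ex]
    have h1 : p ^ (∑ i, (d i).factorization p) = p ^ m := by
      rw [← Finset.prod_pow_eq_pow_sum, ← hprod]
      exact Finset.prod_congr rfl fun i _ => (eq_pow_factorization hp (hdvd i)).symm
    exact Nat.pow_right_injective hp.two_le h1
  · intro e he
    rw [mem_Ex] at he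
    simp only [tuples, Finset.mem_filter, Fintype.mem_piFinset, Nat.mem_divisors]
    refine ⟨fun i => ⟨pow_dvd_pow p ?_, hpm⟩, ?_⟩
    · have : e i ≤ ∑ j, e j := Finset.single_le_sum (fun j _ => Nat.zero_le _) (Finset.mem_univ i)
      omega
    · rw [Finset.prod_pow_eq_pow_sum, he]
  · intro d hd
    funext i
    exact (eq_pow_factorization hp ((hmem d hd).1 i)).symm
  · intro e _
    funext i
    show (p ^ e i).factorization p = e i
    rw [hp.factorization_pow]
    simp
  · intro d hd
    congr 1
    funext i
    exact eq_pow_factorization hp ((hmem d hd).1 i)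

variable (p : ℕ)

/-- a_n(p^m) in exponent coordinates. -/
def bN (n m : ℕ) : ℕ := ∑ e ∈ Ex n m, ∏ i : Fin n, p ^ ((i : ℕ) * e i)

def u (i e : ℕ) : ℤ := if e = 0 then 0 else (p:ℤ) ^ (i * (e - 1))

/-- a_n'(p^m) in exponent coordinates. -/
def c (n m : ℕ) : ℤ := ∑ e ∈ Ex n m, ∏ i : Fin n, ((p:ℤ) ^ ((i : ℕ) * e i) - u p i (e i))

variable {p}

lemma an_eq (hp : p.Prime) (n m : ℕ) : an n (p ^ m) = bN p n m := by
  rw [an, sum_tuples hp n m (fun d => ∏ i : Fin n, d i ^ (i : ℕ))]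
  refine Finset.sum_congr rfl fun e _ => Finset.prod_congr rfl fun i _ => ?_
  rw [← pow_mul, mul_comm]

lemma inner_sum (hp : p.Prime) (i e : ℕ) :
    ∑ g ∈ (p^e).divisors, (moebius g : ℤ) * (((p^e / g : ℕ)) : ℤ) ^ i
      = (p:ℤ) ^ (i * e) - u p i e := by
  rw [Nat.sum_divisors_prime_pow hp]
  rcases Nat.eq_zero_or_pos e with rfl | he
  · simp [u]
  · have hsub : ({0, 1} : Finset ℕ) ⊆ Finset.range (e + 1) := by
      intro x hx
      simp only [Finset.mem_insert, Finset.mem_singleton] at hx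
      rcases hx with rfl | rfl <;> simp [Finset.mem_range] <;> omega
    rw [← Finset.sum_subset hsub ?h]
    case h =>
      intro k _ hk
      simp only [Finset.mem_insert, Finset.mem_singleton] at hk
      push_neg at hk
      rw [ArithmeticFunction.moebius_apply_prime_pow hp hk.1, if_neg hk.2]
      simp
    rw [Finset.sum_pair (by norm_num : (0:ℕ) ≠ 1)]
    have h0 : p ^ e / p ^ 0 = p ^ e := by simp
    have h1 : p ^ e / p ^ 1 = p ^ (e - 1) := Nat.pow_div he hp.pos
    rw [h0, h1, pow_zero, ArithmeticFunction.moebius_apply_one,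
      ArithmeticFunction.moebius_apply_prime_pow hp one_ne_zero, if_pos rfl, u, if_neg he.ne']
    push_cast
    rw [← pow_mul, ← pow_mul, mul_comm e i, mul_comm (e-1) i]
    ring

lemma an'_eq (hp : p.Prime) (n m : ℕ) : an' n (p ^ m) = c p n m := by
  rw [an', sum_tuples hp n m
    (fun d => ∏ i : Fin n, ∑ g ∈ (d i).divisors, (moebius g : ℤ) * ((d i / g : ℕ) : ℤ) ^ (i : ℕ))]
  exact Finset.sum_congr rfl fun e _ => Finset.prod_congr rfl fun i _ => inner_sum hp _ _

/-- Shift identity: for each subset T with card ≤ m, summing the shifted weights gives bN. -/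
lemma shift_sum (n m : ℕ) (T : Finset (Fin n)) (hT : T.card ≤ m) :
    ∑ e ∈ Ex n m, (∏ i ∈ T, u p i (e i)) * ∏ i ∈ Finset.univ \ T, (p:ℤ) ^ ((i : ℕ) * e i)
      = (bN p n (m - T.card) : ℤ) := by
  classical
  set χ : Fin n → ℕ := fun i => if i ∈ T then 1 else 0 with hχ
  have hχsum : ∑ i, χ i = T.card := by
    simp only [hχ, Finset.sum_ite_mem, Finset.univ_inter, Finset.sum_const, smul_eq_mul, mul_one]
  rw [← Finset.sum_filter_of_ne (p := fun e => ∀ i ∈ T, e i ≠ 0) ?hne]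
  case hne =>
    intro e _ hne i hi hie
    apply hne
    rw [mul_eq_zero]
    left
    exact Finset.prod_eq_zero hi (by simp [u, hie])
  rw [bN, Nat.cast_sum]
  refine Finset.sum_nbij' (fun e => fun j => e j - χ j) (fun e => fun j => e j + χ j)
    ?_ ?_ ?_ ?_ ?_
  · intro e he
    simp only [Finset.mem_filter, mem_Ex] at he
    rw [mem_Ex]
    have hle : ∀ j ∈ Finset.univ, χ j ≤ e j := by
      intro j _
      simp only [hχ]
      split
      · have := he.2 j ‹_›; omega
      · omega
    rw [Finset.sum_tsub_distrib _ hle, he.1, hχsum]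
  · intro e he
    rw [mem_Ex] at he
    simp only [Finset.mem_filter, mem_Ex]
    constructor
    · rw [Finset.sum_add_distrib, he, hχsum]
      omega
    · intro i hi
      simp [hχ, hi]
  · intro e he
    simp only [Finset.mem_filter, mem_Ex] at he
    funext j
    show e j - χ j + χ j = e j
    have : χ j ≤ e j := by
      simp only [hχ]; split
      · have := he.2 j ‹_›; omega
      · omega
    omega
  · intro e _
    funext j
    show e j + χ j - χ j = e j
    omega
  · intro e he
    simp only [Finset.mem_filter, mem_Ex] at he
    push_cast
    rw [← Finset.prod_sdiff (Finset.subset_univ T), mul_comm]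
    congr 1
    · refine Finset.prod_congr rfl fun i hi => ?_
      have h0 : χ i = 0 := by simp only [hχ]; rw [if_neg]; exact (Finset.mem_sdiff.1 hi).2
      show ((p:ℤ) ^ ((i:ℕ) * e i)) = (p:ℤ) ^ ((i:ℕ) * (e i - χ i))
      rw [h0, Nat.sub_zero]
    · refine Finset.prod_congr rfl fun i hi => ?_
      have h1 : χ i = 1 := by simp [hχ, hi]
      have h2 : e i ≠ 0 := he.2 i hi
      show u p (i:ℕ) (e i) = (p:ℤ) ^ ((i:ℕ) * (e i - χ i))
      rw [u, if_neg h2, h1]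

lemma key (n m : ℕ) (hm : n ≤ m) :
    c p n m = ∑ j ∈ Finset.range (n+1),
      (-1)^j * (n.choose j : ℤ) * (bN p n (m - j) : ℤ) := by
  classical
  have expand : ∀ e : Fin n → ℕ,
      ∏ i : Fin n, ((p:ℤ) ^ ((i : ℕ) * e i) - u p i (e i))
        = ∑ T ∈ (Finset.univ : Finset (Fin n)).powerset,
            (-1) ^ T.card * ((∏ i ∈ T, u p i (e i)) *
              ∏ i ∈ Finset.univ \ T, (p:ℤ) ^ ((i : ℕ) * e i)) := by
    intro e
    have : ∀ i : Fin n, (p:ℤ) ^ ((i : ℕ) * e i) - u p i (e i)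
        = (-u p i (e i)) + (p:ℤ) ^ ((i : ℕ) * e i) := fun i => by ring
    rw [Finset.prod_congr rfl fun i _ => this i, Finset.prod_add]
    refine Finset.sum_congr rfl fun T _ => ?_
    have hneg : ∏ i ∈ T, (-u p (i:ℕ) (e i)) = (-1:ℤ)^T.card * ∏ i ∈ T, u p (i:ℕ) (e i) := by
      rw [← Finset.prod_const (-1:ℤ), ← Finset.prod_mul_distrib]
      exact Finset.prod_congr rfl fun i _ => by ring
    rw [hneg]
    ring
  rw [c]
  simp_rw [expand]
  rw [Finset.sum_comm]
  have step : ∀ T ∈ (Finset.univ : Finset (Fin n)).powerset,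
      ∑ e ∈ Ex n m, (-1) ^ T.card * ((∏ i ∈ T, u p i (e i)) *
          ∏ i ∈ Finset.univ \ T, (p:ℤ) ^ ((i : ℕ) * e i))
        = (-1) ^ T.card * (bN p n (m - T.card) : ℤ) := by
    intro T _
    have hcard : T.card ≤ m := le_trans (le_trans T.card_le_univ (by simp)) hm
    rw [← Finset.mul_sum, shift_sum n m T hcard]
  rw [Finset.sum_congr rfl step, Finset.sum_powerset]
  rw [Finset.card_univ, Fintype.card_fin]
  refine Finset.sum_congr rfl fun j hj => ?_
  rw [Finset.sum_congr rfl (fun T hT => by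
    rw [(Finset.mem_powersetCard.1 hT).2]), Finset.sum_const, Finset.card_powersetCard,
    Finset.card_univ, Fintype.card_fin]
  push_cast
  ring

variable (p)

/-- Normalized version of bN. -/
noncomputable def F (n m : ℕ) : ℝ :=
  ∑ e ∈ Ex n m, ∏ i : Fin n, ((p:ℝ)⁻¹) ^ ((n - 1 - (i : ℕ)) * e i)

variable {p}

lemma bN_eq_F (hp : p.Prime) (n m : ℕ) :
    (bN p n m : ℝ) = (p:ℝ) ^ ((n-1) * m) * F p n m := by
  have hp0 : (p:ℝ) ≠ 0 := Nat.cast_ne_zero.2 hp.pos.ne'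
  rw [bN, F, Finset.mul_sum, Nat.cast_sum]
  refine Finset.sum_congr rfl fun e he => ?_
  rw [mem_Ex] at he
  push_cast
  have h1 : ∀ i : Fin n, (p:ℝ) ^ ((i : ℕ) * e i)
      = (p:ℝ) ^ ((n-1) * e i) * ((p:ℝ)⁻¹) ^ ((n - 1 - (i : ℕ)) * e i) := by
    intro i
    have hi : (i : ℕ) ≤ n - 1 := by have := i.isLt; omega
    have hmul : (n - 1 - (i : ℕ)) * e i = (n-1) * e i - (i : ℕ) * e i := by
      rw [Nat.sub_mul]
    have hle : (i : ℕ) * e i ≤ (n-1) * e i := Nat.mul_le_mul_right _ hi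
    rw [inv_pow, eq_comm, mul_comm, inv_mul_eq_div, div_eq_iff (by positivity), hmul,
      ← pow_add]
    congr 1
    omega
  rw [Finset.prod_congr rfl fun i _ => h1 i, Finset.prod_mul_distrib,
    Finset.prod_pow_eq_pow_sum, ← Finset.mul_sum, he]

lemma F_nonneg_term (n m : ℕ) (e : Fin n → ℕ) :
    (0:ℝ) ≤ ∏ i : Fin n, ((p:ℝ)⁻¹) ^ ((n - 1 - (i : ℕ)) * e i) := by
  positivity

lemma F_mono (hp : p.Prime) (hn : 1 ≤ n) : Monotone (F p n) := by
  apply monotone_nat_of_le_succ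
  intro m
  classical
  set last : Fin n := ⟨n - 1, by omega⟩ with hlast
  have hw : ∀ x : ℕ, ((p:ℝ)⁻¹) ^ ((n - 1 - (last : ℕ)) * x) = 1 := by
    intro x
    simp [hlast]
  calc F p n m
      = ∑ e ∈ (Ex n m).image (fun e => Function.update e last (e last + 1)),
          ∏ i : Fin n, ((p:ℝ)⁻¹) ^ ((n - 1 - (i : ℕ)) * e i) := by
        rw [Finset.sum_image ?inj]
        case inj =>
          intro e he f hf hef
          funext j
          by_cases hj : j = last
          · subst hj
            have := congrFun hef last
            simp only [Function.update_self] at this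
            omega
          · have := congrFun hef j
            simpa [Function.update_of_ne hj] using this
        refine Finset.sum_congr rfl fun e _ => Finset.prod_congr rfl fun i _ => ?_
        by_cases hi : i = last
        · subst hi; rw [hw, Function.update_self, hw]
        · rw [Function.update_of_ne hi]
    _ ≤ F p n (m+1) := by
        apply Finset.sum_le_sum_of_subset_of_nonneg
        · intro e he
          obtain ⟨e', he', rfl⟩ := Finset.mem_image.1 he
          rw [mem_Ex] at he' ⊢
          rw [← Finset.add_sum_erase _ _ (Finset.mem_univ last)] at he' ⊢
          have h2 : ∑ x ∈ Finset.univ.erase last, Function.update e' last (e' last + 1) x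
              = ∑ x ∈ Finset.univ.erase last, e' x := by
            refine Finset.sum_congr rfl fun x hx => ?_
            rw [Function.update_of_ne (Finset.ne_of_mem_erase hx)]
          rw [Function.update_self, h2]
          omega
        · intro e _ _
          exact F_nonneg_term n (m+1) e

lemma F_bddAbove (hp : p.Prime) (hn : 1 ≤ n) (m : ℕ) : F p n m ≤ 2 ^ n := by
  classical
  set last : Fin n := ⟨n - 1, by omega⟩ with hlast
  have hp2 : (2:ℝ) ≤ (p:ℝ) := by exact_mod_cast hp.two_le
  have hpinv : (p:ℝ)⁻¹ ≤ 2⁻¹ := by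
    apply inv_anti₀ (by norm_num) hp2
  have hpinv_nonneg : (0:ℝ) ≤ (p:ℝ)⁻¹ := by positivity
  set s : Fin n → Finset ℕ := fun i => if i = last then {0} else Finset.range (m+1) with hs
  calc F p n m
      = ∑ e ∈ (Ex n m).image (fun e => Function.update e last 0),
          ∏ i : Fin n, ((p:ℝ)⁻¹) ^ ((n - 1 - (i : ℕ)) * e i) := by
        rw [Finset.sum_image ?inj]
        case inj =>
          intro e he f hf hef
          rw [Finset.mem_coe, mem_Ex] at he hf
          funext j
          by_cases hj : j = last
          · subst hj
            rw [← Finset.add_sum_erase _ _ (Finset.mem_univ last)] at he hf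
            have h2 : ∑ x ∈ Finset.univ.erase last, e x
                = ∑ x ∈ Finset.univ.erase last, f x := by
              refine Finset.sum_congr rfl fun x hx => ?_
              have := congrFun hef x
              simpa [Function.update_of_ne (Finset.ne_of_mem_erase hx)] using this
            omega
          · have := congrFun hef j
            simpa [Function.update_of_ne hj] using this
        refine Finset.sum_congr rfl fun e _ => Finset.prod_congr rfl fun i _ => ?_
        by_cases hi : i = last
        · subst hi; simp [hlast]
        · rw [Function.update_of_ne hi]
    _ ≤ ∑ e ∈ Fintype.piFinset s, ∏ i : Fin n, ((p:ℝ)⁻¹) ^ ((n - 1 - (i : ℕ)) * e i) := by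
        apply Finset.sum_le_sum_of_subset_of_nonneg
        · intro e he
          obtain ⟨e', he', rfl⟩ := Finset.mem_image.1 he
          rw [mem_Ex] at he'
          rw [Fintype.mem_piFinset]
          intro a
          by_cases ha : a = last
          · subst ha; simp [hs]
          · simp only [hs, if_neg ha, Finset.mem_range, Function.update_of_ne ha]
            have : e' a ≤ ∑ i, e' i :=
              Finset.single_le_sum (fun i _ => Nat.zero_le _) (Finset.mem_univ a)
            omega
        · intro e _ _
          exact F_nonneg_term n m e
    _ = ∏ i : Fin n, ∑ k ∈ s i, ((p:ℝ)⁻¹) ^ ((n - 1 - (i : ℕ)) * k) := by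
        rw [Finset.prod_univ_sum]
    _ ≤ ∏ i : Fin n, (2:ℝ) := by
        apply Finset.prod_le_prod
        · intro i _
          apply Finset.sum_nonneg
          intro k _
          positivity
        · intro i _
          by_cases hi : i = last
          · subst hi; simp [hs]
          · rw [hs]
            simp only [if_neg hi]
            have hri : 1 ≤ n - 1 - (i : ℕ) := by
              have h1 := i.isLt
              have h2 : (i : ℕ) ≠ n - 1 := fun h => hi (Fin.ext h)
              omega
            calc ∑ k ∈ Finset.range (m+1), ((p:ℝ)⁻¹) ^ ((n - 1 - (i : ℕ)) * k)
                ≤ ∑ k ∈ Finset.range (m+1), (2:ℝ)⁻¹ ^ k := by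
                  apply Finset.sum_le_sum
                  intro k _
                  calc ((p:ℝ)⁻¹) ^ ((n - 1 - (i : ℕ)) * k)
                      ≤ ((p:ℝ)⁻¹) ^ (1 * k) := by
                        apply pow_le_pow_of_le_one hpinv_nonneg
                        · apply inv_le_one_of_one_le₀; linarith
                        · exact Nat.mul_le_mul_right k hri
                    _ ≤ (2:ℝ)⁻¹ ^ (1 * k) := by
                        apply pow_le_pow_left₀ hpinv_nonneg hpinv
                    _ = (2:ℝ)⁻¹ ^ k := by rw [one_mul]
              _ ≤ 2 := by
                  rw [geom_sum_eq (by norm_num)]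
                  have : (0:ℝ) < (2:ℝ)⁻¹ ^ (m+1) := by positivity
                  norm_num
                  nlinarith
    _ = 2 ^ n := by rw [Finset.prod_const, Finset.card_univ, Fintype.card_fin]

lemma one_le_F (hp : p.Prime) (hn : 1 ≤ n) (m : ℕ) : 1 ≤ F p n m := by
  classical
  set last : Fin n := ⟨n - 1, by omega⟩ with hlast
  have hmem : (Pi.single last m : Fin n → ℕ) ∈ Ex n m := by
    rw [mem_Ex]
    simp [Finset.sum_pi_single]
  have hval : ∏ i : Fin n, ((p:ℝ)⁻¹) ^ ((n - 1 - (i : ℕ)) * (Pi.single last m : Fin n → ℕ) i)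
      = 1 := by
    apply Finset.prod_eq_one
    intro i _
    by_cases hi : i = last
    · subst hi; simp [hlast]
    · rw [Pi.single_eq_of_ne hi]
      simp
  calc (1:ℝ) = ∏ i : Fin n, ((p:ℝ)⁻¹) ^ ((n - 1 - (i : ℕ)) * (Pi.single last m : Fin n → ℕ) i) :=
        hval.symm
    _ ≤ F p n m := Finset.single_le_sum (fun e _ => F_nonneg_term n m e) hmem

lemma bN_pos (hp : p.Prime) (hn : 1 ≤ n) (m : ℕ) : 0 < bN p n m := by
  classical
  have h : (0:ℝ) < (bN p n m : ℝ) := by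
    rw [bN_eq_F hp]
    have := one_le_F hp hn m (n := n)
    have hppos : (0:ℝ) < (p:ℝ) := by exact_mod_cast hp.pos
    positivity
  exact_mod_cast h

end DLaux

open DLaux

theorem density_limit (n : ℕ) (hn : 3 ≤ n) (p : ℕ) (hp : p.Prime) :
    Filter.Tendsto (fun m : ℕ => (an' n (p ^ m) : ℝ) / (an n (p ^ m) : ℝ))
      Filter.atTop (nhds ((1 - 1 / (p : ℝ) ^ (n - 1)) ^ n)) := by
  classical
  have hn1 : 1 ≤ n := by omega
  have hp0 : (p:ℝ) ≠ 0 := Nat.cast_ne_zero.2 hp.pos.ne'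
  have hppos : (0:ℝ) < (p:ℝ) := by exact_mod_cast hp.pos
  set t : ℝ := ((p:ℝ) ^ (n-1))⁻¹ with ht
  -- limit of F
  set L : ℝ := ⨆ m, F p n m with hL
  have hFtendsto : Filter.Tendsto (F p n) Filter.atTop (nhds L) := by
    apply tendsto_atTop_ciSup (F_mono hp hn1)
    exact ⟨2 ^ n, by rintro x ⟨m, rfl⟩; exact F_bddAbove hp hn1 m⟩
  have hL1 : 1 ≤ L := le_trans (one_le_F hp hn1 0) ((F_mono hp hn1).ge_of_tendsto hFtendsto 0)
  have hLne : L ≠ 0 := by linarith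
  -- ratio limit
  have hratio : ∀ j : ℕ, Filter.Tendsto
      (fun m : ℕ => ((bN p n (m - j) : ℝ)) / (bN p n m : ℝ)) Filter.atTop (nhds (t ^ j)) := by
    intro j
    have hFj : Filter.Tendsto (fun m : ℕ => F p n (m - j)) Filter.atTop (nhds L) :=
      hFtendsto.comp (Filter.tendsto_sub_atTop_nat j)
    have hdiv : Filter.Tendsto (fun m : ℕ => F p n (m - j) / F p n m) Filter.atTop
        (nhds (L / L)) := hFj.div hFtendsto hLne
    rw [div_self hLne] at hdiv
    have heq : ∀ᶠ m : ℕ in Filter.atTop,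
        t ^ j * (F p n (m - j) / F p n m) = (bN p n (m - j) : ℝ) / (bN p n m : ℝ) := by
      filter_upwards [Filter.eventually_ge_atTop j] with m hm
      rw [bN_eq_F hp, bN_eq_F hp]
      have hFm1 : (1:ℝ) ≤ F p n m := one_le_F hp hn1 m
      have hle : (n-1) * j ≤ (n-1) * m := Nat.mul_le_mul_left _ hm
      have hpow : (p:ℝ) ^ ((n-1) * (m - j)) = (p:ℝ) ^ ((n-1) * m) * t ^ j := by
        rw [ht, inv_pow, ← pow_mul, Nat.mul_sub, pow_sub₀ _ hp0 hle]
      rw [hpow]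
      field_simp
    have := (hdiv.const_mul (t ^ j)).congr' heq
    simpa using this
  -- final computation
  have hfinal : Filter.Tendsto
      (fun m : ℕ => ∑ j ∈ Finset.range (n+1),
        ((-1:ℝ))^j * (n.choose j : ℝ) * ((bN p n (m - j) : ℝ) / (bN p n m : ℝ)))
      Filter.atTop (nhds (∑ j ∈ Finset.range (n+1), ((-1:ℝ))^j * (n.choose j : ℝ) * t ^ j)) := by
    apply tendsto_finset_sum
    intro j _
    exact (hratio j).const_mul _
  have hsum : ∑ j ∈ Finset.range (n+1), ((-1:ℝ))^j * (n.choose j : ℝ) * t ^ j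
      = (1 - 1 / (p : ℝ) ^ (n - 1)) ^ n := by
    have : (1 - 1 / (p : ℝ) ^ (n - 1)) = (-t) + 1 := by
      rw [ht]; field_simp; ring
    rw [this, add_pow]
    refine Finset.sum_congr rfl fun j _ => ?_
    rw [neg_pow]
    ring
  rw [← hsum]
  apply hfinal.congr'
  filter_upwards [Filter.eventually_ge_atTop n] with m hm
  have hb0 : (bN p n m : ℝ) ≠ 0 := by
    exact_mod_cast (bN_pos hp hn1 m).ne'
  rw [an_eq hp, an'_eq hp, key n m hm]
  push_cast
  rw [Finset.sum_div]
  refine Finset.sum_congr rfl fun j _ => ?_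
  ring
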